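/- Let G be a finite simple graph that is C₅-free (contains no cycle on 5 vertices as a subgraph), and let H be a subgraph of G whose edge set is a strong clique of G, i.e., any two distinct edges of H either share an endpoint or some endpoint of one is adjacent in G to some endpoint of the other. Then the number of edges of H satisfies e(H) ≤ Δ(H)·(σ_G(H) − Δ(H)), and consequently 4·e(H) ≤ σ_G(H)², where Δ(H) is the maximum degree of H and σ_G(H) is the maximum over edges xy of H of deg_G(x) + deg_G(y) (taken to be 0 if H has no edges). -/

import Mathlib

open SimpleGraph
open Finset

/-- `G.ContainsSub H` means `G` contains a copy of `H` as a (not necessarily induced)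
subgraph, i.e. there is an injective graph homomorphism from `H` to `G`. -/
def SimpleGraph.ContainsSub {V W : Type*} (G : SimpleGraph V) (H : SimpleGraph W) : Prop :=
  ∃ f : W → V, Function.Injective f ∧ ∀ a b, H.Adj a b → G.Adj (f a) (f b)

/-- A strong clique of `G`: a set of edges of `G` any two distinct members of which
either share an endpoint or have endpoints joined by an edge of `G`. -/
def SimpleGraph.IsStrongClique {V : Type*} (G : SimpleGraph V) (F : Finset (Sym2 V)) : Prop :=
  (F : Set (Sym2 V)) ⊆ G.edgeSet ∧
    ∀ e ∈ F, ∀ f ∈ F, e ≠ f → ∃ x ∈ e, ∃ y ∈ f, x = y ∨ G.Adj x y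

/-- The strong clique number `ω₂'(G)`: the largest cardinality of a strong clique. -/
noncomputable def SimpleGraph.strongCliqueNumber {V : Type*} (G : SimpleGraph V) : ℕ :=
  sSup {n | ∃ F : Finset (Sym2 V), G.IsStrongClique F ∧ F.card = n}

/-- The Ore-degree `σ_G(H)` of a subgraph `H` in `G`: the maximum over edges `xy` of `H`
of `deg_G x + deg_G y` (`0` if `H` has no edges). -/
def SimpleGraph.oreDegreeOn {V : Type*} [Fintype V] [DecidableEq V] (G H : SimpleGraph V)
    [DecidableRel G.Adj] [DecidableRel H.Adj] : ℕ :=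
  H.edgeFinset.sup fun e =>
    Sym2.lift ⟨fun x y => G.degree x + G.degree y, fun _ _ => Nat.add_comm _ _⟩ e

private lemma c5_aux {V : Type*} (G : SimpleGraph V)
    (hfree : ¬ G.ContainsSub (cycleGraph 5)) {a b c d e : V}
    (h1 : G.Adj a b) (h2 : G.Adj b c) (h3 : G.Adj c d) (h4 : G.Adj d e) (h5 : G.Adj e a)
    (hac : a ≠ c) (had : a ≠ d) (hbd : b ≠ d) (hbe : b ≠ e) (hce : c ≠ e) : False := by
  apply hfree
  have hab := h1.ne; have hbc := h2.ne; have hcd := h3.ne; have hde := h4.ne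
  have hea := h5.ne
  refine ⟨![a,b,c,d,e], ?_, ?_⟩
  · intro i j hij
    fin_cases i <;> fin_cases j <;> simp_all
  · intro i j hij
    rw [cycleGraph_adj'] at hij
    fin_cases i <;> fin_cases j <;>
      simp_all [Fin.ext_iff] <;>
      first | exact h1.symm | exact h2.symm | exact h3.symm | exact h4.symm
            | exact h5.symm | exact absurd hij (by decide)


/-- Lemma 2.2 (simple-graph version): if `G` is `C₅`-free and `H ≤ G` is a subgraph
whose edge set is a strong clique of `G`, then
`e(H) ≤ Δ(H) · (σ_G(H) - Δ(H))` and `4 · e(H) ≤ σ_G(H)²`. -/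
theorem card_edge_le_of_strongClique_c5Free {V : Type*} [Fintype V] [DecidableEq V]
    (G H : SimpleGraph V) [DecidableRel G.Adj] [DecidableRel H.Adj] (hHG : H ≤ G)
    (hfree : ¬ G.ContainsSub (cycleGraph 5))
    (hclique : G.IsStrongClique H.edgeFinset) :
    H.edgeFinset.card ≤ H.maxDegree * (G.oreDegreeOn H - H.maxDegree) ∧
    4 * H.edgeFinset.card ≤ (G.oreDegreeOn H) ^ 2 := by
  by_cases hFne : H.edgeFinset.Nonempty
  case neg =>
    rw [Finset.not_nonempty_iff_eq_empty] at hFne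
    simp [hFne]
  -- setup
  obtain ⟨e₀, he₀⟩ := hFne
  have hV : Nonempty V := by
    induction e₀ using Sym2.ind with
    | _ a b => exact ⟨a⟩
  obtain ⟨u, hu⟩ := H.exists_maximal_degree_vertex
  set t := H.maxDegree with ht_def
  set σ := G.oreDegreeOn H with hσ_def
  set N : Finset V := H.neighborFinset u with hN_def
  have hNcard : N.card = t := by rw [hN_def, card_neighborFinset_eq_degree, hu]
  have hNsubG : N ⊆ G.neighborFinset u := by
    intro w hw
    rw [mem_neighborFinset] at hw ⊢
    exact hHG hw
  set P : Finset V := G.neighborFinset u \ N with hP_def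
  have hPN : P.card + N.card = G.degree u := by
    rw [hP_def, card_sdiff_add_card_eq_card hNsubG, card_neighborFinset_eq_degree]
  -- t ≥ 1
  have ht1 : 1 ≤ t := by
    induction e₀ using Sym2.ind with
    | _ a b =>
      have hab : H.Adj a b := by rwa [mem_edgeFinset, mem_edgeSet] at he₀
      have : 1 ≤ H.degree a := by
        rw [← card_neighborFinset_eq_degree]
        exact card_pos.mpr ⟨b, (mem_neighborFinset _ _ _).mpr hab⟩
      exact le_trans this (H.degree_le_maxDegree a)
  have hNne : N.Nonempty := by
    rw [← card_pos, hNcard]; exact ht1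
  -- max G-degree neighbor
  obtain ⟨v₀, hv₀N, hv₀max⟩ := Finset.exists_max_image N (fun v => G.degree v) hNne
  set D := G.degree v₀ with hD_def
  have huv₀ : H.Adj u v₀ := (H.mem_neighborFinset u v₀).mp hv₀N
  -- σ lower bound
  have hσ_ge : G.degree u + D ≤ σ := by
    have hmem : s(u, v₀) ∈ H.edgeFinset := by
      rw [mem_edgeFinset, mem_edgeSet]; exact huv₀
    have := Finset.le_sup (f := fun e => Sym2.lift
      ⟨fun x y => G.degree x + G.degree y, fun _ _ => Nat.add_comm _ _⟩ e) hmem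
    simp at this
    exact this
  -- the pieces
  set F := H.edgeFinset with hF_def
  set Eu : Finset (Sym2 V) := F.filter (fun e => u ∈ e) with hEu_def
  set Ev : V → Finset (Sym2 V) := fun v => F.filter (fun e => v ∈ e ∧ u ∉ e) with hEv_def
  set Ep : V → Finset (Sym2 V) := fun p => F.filter (fun e => p ∈ e) with hEp_def
  set Ex : V → Finset (Sym2 V) := fun x => F.filter (fun e => x ∈ e ∧ ∀ w ∈ N, w ∉ e)
    with hEx_def
  set X : Finset V := univ.filter (fun x => (∀ w ∈ N, G.Adj w x) ∧ ¬ G.Adj u x ∧ x ≠ u)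
    with hX_def
  -- incidence filter
  have hinc : ∀ v : V, (F.filter (fun e => v ∈ e)).card = H.degree v := by
    intro v
    rw [hF_def, ← incidenceFinset_eq_filter, card_incidenceFinset_eq_degree]
  -- coverage
  have key : ∀ a b : V, s(a,b) ∈ F →
      s(a,b) ∈ Eu ∪ N.biUnion Ev ∪ P.biUnion Ep ∪ X.biUnion Ex := by
    intro a b hab_mem
    have hadj : H.Adj a b := by rwa [hF_def, mem_edgeFinset, mem_edgeSet] at hab_mem
    by_cases hu_e : u ∈ s(a,b)
    · exact mem_union_left _ (mem_union_left _ (mem_union_left _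
        (mem_filter.mpr ⟨hab_mem, hu_e⟩)))
    by_cases haN : a ∈ N
    · refine mem_union_left _ (mem_union_left _ (mem_union_right _ ?_))
      exact mem_biUnion.mpr ⟨a, haN, mem_filter.mpr ⟨hab_mem, Sym2.mem_mk_left a b, hu_e⟩⟩
    by_cases hbN : b ∈ N
    · refine mem_union_left _ (mem_union_left _ (mem_union_right _ ?_))
      exact mem_biUnion.mpr ⟨b, hbN, mem_filter.mpr ⟨hab_mem, Sym2.mem_mk_right a b, hu_e⟩⟩
    by_cases haP : a ∈ P
    · exact mem_union_left _ (mem_union_right _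
        (mem_biUnion.mpr ⟨a, haP, mem_filter.mpr ⟨hab_mem, Sym2.mem_mk_left a b⟩⟩))
    by_cases hbP : b ∈ P
    · exact mem_union_left _ (mem_union_right _
        (mem_biUnion.mpr ⟨b, hbP, mem_filter.mpr ⟨hab_mem, Sym2.mem_mk_right a b⟩⟩))
    -- far case
    have hau : a ≠ u := fun h => hu_e (h ▸ Sym2.mem_mk_left a b)
    have hbu : b ≠ u := fun h => hu_e (h ▸ Sym2.mem_mk_right a b)
    have haG : ¬ G.Adj u a := by
      intro h
      exact haP (mem_sdiff.mpr ⟨(mem_neighborFinset _ _ _).mpr h, haN⟩)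
    have hbG : ¬ G.Adj u b := by
      intro h
      exact hbP (mem_sdiff.mpr ⟨(mem_neighborFinset _ _ _).mpr h, hbN⟩)
    have hstep : ∀ w ∈ N, G.Adj w a ∨ G.Adj w b := by
      intro w hw
      have hw_adj : H.Adj u w := (H.mem_neighborFinset u w).mp hw
      have huw : s(u,w) ∈ F := by rw [hF_def, mem_edgeFinset, mem_edgeSet]; exact hw_adj
      have hne : s(a,b) ≠ s(u,w) := by
        intro h
        exact hu_e (h ▸ Sym2.mem_mk_left u w)
      obtain ⟨p, hp, q, hq, hpq⟩ := hclique.2 _ hab_mem _ huw hne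
      rw [Sym2.mem_iff] at hp hq
      have hwG : G.Adj u w := hHG hw_adj
      rcases hpq with rfl | hadj'
      · -- p = q
        rcases hq with rfl | rfl
        · rcases hp with rfl | rfl
          · exact absurd rfl hau
          · exact absurd rfl hbu
        · rcases hp with rfl | rfl
          · exact absurd hw haN
          · exact absurd hw hbN
      · rcases hq with rfl | rfl
        · -- q = u : G.Adj p u
          rcases hp with rfl | rfl
          · exact absurd hadj'.symm haG
          · exact absurd hadj'.symm hbG
        · rcases hp with rfl | rfl
          · exact Or.inl hadj'.symm
          · exact Or.inr hadj'.symm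
    by_cases hs : ∀ w ∈ N, G.Adj w a
    · refine mem_union_right _ (mem_biUnion.mpr ⟨a, ?_, ?_⟩)
      · exact mem_filter.mpr ⟨mem_univ a, hs, haG, hau⟩
      · refine mem_filter.mpr ⟨hab_mem, Sym2.mem_mk_left a b, ?_⟩
        intro w hw hwe
        rw [Sym2.mem_iff] at hwe
        rcases hwe with rfl | rfl
        · exact haN hw
        · exact hbN hw
    by_cases hs' : ∀ w ∈ N, G.Adj w b
    · refine mem_union_right _ (mem_biUnion.mpr ⟨b, ?_, ?_⟩)
      · exact mem_filter.mpr ⟨mem_univ b, hs', hbG, hbu⟩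
      · refine mem_filter.mpr ⟨hab_mem, Sym2.mem_mk_right a b, ?_⟩
        intro w hw hwe
        rw [Sym2.mem_iff] at hwe
        rcases hwe with rfl | rfl
        · exact haN hw
        · exact hbN hw
    · exfalso
      push_neg at hs hs'
      obtain ⟨w₁, hw₁N, hw₁a⟩ := hs
      obtain ⟨w₂, hw₂N, hw₂b⟩ := hs'
      have hw₁b : G.Adj w₁ b := (hstep w₁ hw₁N).resolve_left hw₁a
      have hw₂a : G.Adj w₂ a := (hstep w₂ hw₂N).resolve_right hw₂b
      have hw₁w₂ : w₁ ≠ w₂ := by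
        rintro rfl; exact hw₁a hw₂a
      have hw₁G : G.Adj u w₁ := hHG ((H.mem_neighborFinset u w₁).mp hw₁N)
      have hw₂G : G.Adj u w₂ := hHG ((H.mem_neighborFinset u w₂).mp hw₂N)
      refine c5_aux G hfree hw₂G hw₂a (hHG hadj) hw₁b.symm hw₁G.symm
        (Ne.symm hau) (Ne.symm hbu) (fun h => hbG (by rw [h] at hw₂G; exact hw₂G))
        hw₁w₂.symm (fun h => haG (by rw [h]; exact hw₁G))
  have hcov : F ⊆ Eu ∪ N.biUnion Ev ∪ P.biUnion Ep ∪ X.biUnion Ex := fun e he =>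
    Sym2.ind key e he
  -- cardinalities
  have hEu_card : Eu.card = t := by rw [hEu_def, hinc u, ← hu]
  have hEp_card : ∀ p : V, (Ep p).card ≤ t := by
    intro p
    rw [hEp_def]
    rw [hinc p]
    exact H.degree_le_maxDegree p
  have hEv_card : ∀ v ∈ N, (Ev v).card + 1 ≤ H.degree v := by
    intro v hvN
    have hvadj : H.Adj u v := (H.mem_neighborFinset u v).mp hvN
    have hmm : s(u,v) ∈ F.filter (fun e => v ∈ e) := by
      refine mem_filter.mpr ⟨?_, Sym2.mem_mk_right u v⟩
      rw [hF_def, mem_edgeFinset, mem_edgeSet]; exact hvadj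
    have hnotin : s(u,v) ∉ Ev v := by
      rw [hEv_def]
      intro h
      exact (mem_filter.mp h).2.2 (Sym2.mem_mk_left u v)
    have hsub : insert s(u,v) (Ev v) ⊆ F.filter (fun e => v ∈ e) := by
      intro e he
      rcases mem_insert.mp he with rfl | he
      · exact hmm
      · rw [hEv_def] at he
        exact mem_filter.mpr ⟨(mem_filter.mp he).1, (mem_filter.mp he).2.1⟩
    calc (Ev v).card + 1 = (insert s(u,v) (Ev v)).card := (card_insert_of_notMem hnotin).symm
      _ ≤ (F.filter (fun e => v ∈ e)).card := card_le_card hsub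
      _ = H.degree v := hinc v
  have hEx_card : ∀ x : V, (Ex x).card + (N ∩ H.neighborFinset x).card ≤ t := by
    intro x
    set M : Finset (Sym2 V) := (N ∩ H.neighborFinset x).image (fun w => s(x,w)) with hM_def
    have hMcard : M.card = (N ∩ H.neighborFinset x).card := by
      rw [hM_def]
      apply card_image_of_injOn
      intro w₁ _ w₂ _ hww
      exact Sym2.congr_right.mp hww
    have hdisj : Disjoint (Ex x) M := by
      rw [Finset.disjoint_left]
      intro e he heM
      rw [hM_def, mem_image] at heM
      obtain ⟨w, hw, rfl⟩ := heM
      rw [hEx_def] at he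
      exact (mem_filter.mp he).2.2 w (mem_inter.mp hw).1 (Sym2.mem_mk_right x w)
    have hsub : Ex x ∪ M ⊆ F.filter (fun e => x ∈ e) := by
      intro e he
      rcases mem_union.mp he with he | he
      · rw [hEx_def] at he
        exact mem_filter.mpr ⟨(mem_filter.mp he).1, (mem_filter.mp he).2.1⟩
      · rw [hM_def, mem_image] at he
        obtain ⟨w, hw, rfl⟩ := he
        have hadjxw : H.Adj x w := (H.mem_neighborFinset x w).mp (mem_inter.mp hw).2
        refine mem_filter.mpr ⟨?_, Sym2.mem_mk_left x w⟩
        rw [hF_def, mem_edgeFinset, mem_edgeSet]; exact hadjxw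
    calc (Ex x).card + (N ∩ H.neighborFinset x).card
        = (Ex x ∪ M).card := by rw [card_union_of_disjoint hdisj, hMcard]
      _ ≤ (F.filter (fun e => x ∈ e)).card := card_le_card hsub
      _ = H.degree x := hinc x
      _ ≤ t := H.degree_le_maxDegree x
  -- (iii)
  have hXsubGv : ∀ v ∈ N, ∀ x ∈ X, x ∈ G.neighborFinset v := by
    intro v hv x hx
    rw [hX_def, mem_filter] at hx
    exact (mem_neighborFinset _ _ _).mpr (hx.2.1 v hv)
  have hiii : ∀ v ∈ N, (Ev v).card + (1 + (X \ H.neighborFinset v).card) ≤ D := by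
    intro v hv
    have h1 : H.degree v + (X \ H.neighborFinset v).card ≤ D := by
      have hdisj : Disjoint (H.neighborFinset v) (X \ H.neighborFinset v) :=
        Finset.disjoint_sdiff
      have hsub : H.neighborFinset v ∪ (X \ H.neighborFinset v) ⊆ G.neighborFinset v := by
        intro z hz
        rcases mem_union.mp hz with hz | hz
        · rw [mem_neighborFinset] at hz ⊢
          exact hHG hz
        · exact hXsubGv v hv z (mem_sdiff.mp hz).1
      calc H.degree v + (X \ H.neighborFinset v).card
          = (H.neighborFinset v ∪ (X \ H.neighborFinset v)).card := by
            rw [card_union_of_disjoint hdisj, card_neighborFinset_eq_degree]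
        _ ≤ (G.neighborFinset v).card := card_le_card hsub
        _ = G.degree v := card_neighborFinset_eq_degree _ _
        _ ≤ D := hv₀max v hv
    have h2 := hEv_card v hv
    omega
  -- abbreviations for sums
  set A := ∑ v ∈ N, (Ev v).card with hA_def
  set B := ∑ v ∈ N, (X \ H.neighborFinset v).card with hB_def
  set S := ∑ v ∈ N, (X ∩ H.neighborFinset v).card with hS_def
  set S' := ∑ x ∈ X, (N ∩ H.neighborFinset x).card with hS'_def
  set EXs := ∑ x ∈ X, (Ex x).card with hEXs_def
  have hANB : A + (t + B) ≤ t * D := by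
    have := Finset.sum_le_card_nsmul N (fun v => (Ev v).card + (1 + (X \ H.neighborFinset v).card)) D hiii
    rw [smul_eq_mul, hNcard] at this
    calc A + (t + B) = ∑ v ∈ N, ((Ev v).card + (1 + (X \ H.neighborFinset v).card)) := by
          rw [Finset.sum_add_distrib, Finset.sum_add_distrib, Finset.sum_const, smul_eq_mul,
            mul_one, hNcard, hA_def, hB_def]
      _ ≤ t * D := this
  have hSB : S + B = t * X.card := by
    have : ∀ v ∈ N, (X ∩ H.neighborFinset v).card + (X \ H.neighborFinset v).card = X.card :=
      fun v _ => Finset.card_inter_add_card_sdiff X (H.neighborFinset v)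
    calc S + B = ∑ v ∈ N, ((X ∩ H.neighborFinset v).card + (X \ H.neighborFinset v).card) := by
          rw [Finset.sum_add_distrib, hS_def, hB_def]
      _ = ∑ v ∈ N, X.card := Finset.sum_congr rfl this
      _ = t * X.card := by rw [Finset.sum_const, smul_eq_mul, hNcard]
  have hSS' : S = S' := by
    have h1 : ∀ v : V, X ∩ H.neighborFinset v = X.filter (fun x => H.Adj v x) := by
      intro v
      ext z
      simp [mem_inter, mem_filter, mem_neighborFinset, and_comm]
    have h2 : ∀ x : V, N ∩ H.neighborFinset x = N.filter (fun v => H.Adj v x) := by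
      intro x
      ext z
      simp only [mem_inter, mem_filter, mem_neighborFinset]
      rw [H.adj_comm]
    rw [hS_def, hS'_def]
    calc ∑ v ∈ N, (X ∩ H.neighborFinset v).card
        = ∑ v ∈ N, ∑ x ∈ X, (if H.Adj v x then 1 else 0) := by
          refine Finset.sum_congr rfl fun v _ => ?_
          rw [h1 v, Finset.card_filter]
      _ = ∑ x ∈ X, ∑ v ∈ N, (if H.Adj v x then 1 else 0) := Finset.sum_comm
      _ = ∑ x ∈ X, (N ∩ H.neighborFinset x).card := by
          refine Finset.sum_congr rfl fun x _ => ?_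
          rw [h2 x, Finset.card_filter]
  have hEXS' : EXs + S' ≤ X.card * t := by
    have := Finset.sum_le_card_nsmul X (fun x => (Ex x).card + (N ∩ H.neighborFinset x).card) t
      (fun x _ => hEx_card x)
    rw [smul_eq_mul] at this
    calc EXs + S' = ∑ x ∈ X, ((Ex x).card + (N ∩ H.neighborFinset x).card) := by
          rw [Finset.sum_add_distrib, hEXs_def, hS'_def]
      _ ≤ X.card * t := this
  have hEXB : EXs ≤ B := by
    have h2 : S' + B = X.card * t := by rw [← hSS', mul_comm]; exact hSB
    linarith [hEXS']
  have hPsum : ∑ p ∈ P, (Ep p).card ≤ P.card * t := by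
    have := Finset.sum_le_card_nsmul P (fun p => (Ep p).card) t (fun p _ => hEp_card p)
    rwa [smul_eq_mul] at this
  have hFcard : F.card ≤ t + A + P.card * t + EXs := by
    calc F.card ≤ (Eu ∪ N.biUnion Ev ∪ P.biUnion Ep ∪ X.biUnion Ex).card := card_le_card hcov
      _ ≤ (Eu ∪ N.biUnion Ev ∪ P.biUnion Ep).card + (X.biUnion Ex).card := card_union_le _ _
      _ ≤ ((Eu ∪ N.biUnion Ev).card + (P.biUnion Ep).card) + (X.biUnion Ex).card := by
          exact Nat.add_le_add_right (card_union_le _ _) _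
      _ ≤ ((Eu.card + (N.biUnion Ev).card) + (P.biUnion Ep).card) + (X.biUnion Ex).card := by
          exact Nat.add_le_add_right (Nat.add_le_add_right (card_union_le _ _) _) _
      _ ≤ ((t + A) + P.card * t) + EXs := by
          refine Nat.add_le_add (Nat.add_le_add (Nat.add_le_add ?_ ?_) ?_) ?_
          · exact le_of_eq hEu_card
          · exact le_trans (card_biUnion_le) (le_of_eq rfl)
          · exact le_trans (card_biUnion_le) hPsum
          · exact le_trans (card_biUnion_le) (le_of_eq rfl)
      _ = t + A + P.card * t + EXs := rfl
  have hmain : F.card ≤ t * (D + P.card) := by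
    have h1 : F.card ≤ t + A + P.card * t + B := by linarith [hFcard, hEXB]
    have h2 : t + A + B ≤ t * D := by linarith [hANB]
    calc F.card ≤ t * D + P.card * t := by linarith
      _ = t * (D + P.card) := by ring
  have hdegu : G.degree u = P.card + t := by omega
  have hle : t + (D + P.card) ≤ σ := by omega
  have ht_le_σ : t ≤ σ := le_trans (Nat.le_add_right t _) hle
  constructor
  · refine le_trans hmain (Nat.mul_le_mul_left t ?_)
    exact Nat.le_sub_of_add_le (by omega)
  · have hFm : F.card ≤ t * (σ - t) := by
      refine le_trans hmain (Nat.mul_le_mul_left t (Nat.le_sub_of_add_le (by omega)))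
    set m := σ - t with hm_def
    have hm : t + m = σ := by omega
    have hsq : 2 * t * m ≤ t^2 + m^2 := two_mul_le_add_sq t m
    calc 4 * F.card ≤ 4 * (t * m) := by linarith [hFm]
      _ ≤ (t + m)^2 := by nlinarith
      _ = σ^2 := by rw [hm]
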